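/- Suppose in random cyclic sampling of the sampled Tikhonov method the parameters satisfy (M/k)·Σ_{i=1}^{k}Λ_i = λ for all k that are multiples of M (e.g. Λ_i = λ/M for all i), with λ > 0. Then for every epoch j, x_{jM} = (AᵀA + λLᵀL)^{-1}Aᵀb, i.e. the iterate equals the exact Tikhonov solution x(λ) after every epoch. -/

import Mathlib

open Matrix Finset

private lemma sTik_sum_mulVec {n m : ℕ} {ι : Type*} (s : Finset ι)
    (f : ι → Matrix (Fin n) (Fin m) ℝ) (v : Fin m → ℝ) :
    (∑ i ∈ s, f i) *ᵥ v = ∑ i ∈ s, (f i) *ᵥ v := by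
  induction s using Finset.cons_induction with
  | empty => simp
  | cons a s ha ih => simp [Matrix.add_mulVec, ih]

private lemma sTik_smul_posDef {n : ℕ} {G : Matrix (Fin n) (Fin n) ℝ} (hG : G.PosDef)
    {c : ℝ} (hc : 0 < c) : (c • G).PosDef := by
  refine posDef_iff_dotProduct_mulVec.mpr ⟨?_, fun x hx => ?_⟩
  · have := hG.1
    unfold Matrix.IsHermitian at this ⊢
    rw [conjTranspose_smul, this]
    simp
  · rw [smul_mulVec, dotProduct_smul, smul_eq_mul]
    exact mul_pos hc (hG.dotProduct_mulVec_pos hx)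

private lemma sTik_posSemidef_tmul {s n : ℕ} (L : Matrix (Fin s) (Fin n) ℝ) :
    (Lᵀ * L).PosSemidef := by
  have := Matrix.posSemidef_conjTranspose_mul_self L
  rwa [conjTranspose_eq_transpose_of_trivial] at this

private lemma sTik_posDef_of_rank {s n : ℕ} (L : Matrix (Fin s) (Fin n) ℝ)
    (hL : L.rank = n) : (Lᵀ * L).PosDef := by
  have hker : ∀ v : Fin n → ℝ, L *ᵥ v = 0 → v = 0 := by
    rw [← Matrix.ker_mulVecLin_eq_bot_iff]
    have hrn := LinearMap.finrank_range_add_finrank_ker L.mulVecLin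
    rw [show Module.finrank ℝ (LinearMap.range L.mulVecLin) = n from hL] at hrn
    simp only [Module.finrank_fintype_fun_eq_card, Fintype.card_fin] at hrn
    have h0 : Module.finrank ℝ (LinearMap.ker L.mulVecLin) = 0 := by omega
    exact Submodule.finrank_eq_zero.mp h0
  refine posDef_iff_dotProduct_mulVec.mpr ⟨(sTik_posSemidef_tmul L).1, fun x hx => ?_⟩
  have heq : star x ⬝ᵥ ((Lᵀ * L) *ᵥ x) = (L *ᵥ x) ⬝ᵥ (L *ᵥ x) := by
    rw [star_trivial, ← mulVec_mulVec, dotProduct_mulVec, vecMul_transpose]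
  rw [heq]
  rcases lt_or_eq_of_le (Finset.sum_nonneg fun i _ => mul_self_nonneg ((L *ᵥ x) i)) with h | h
  · exact h
  · exact absurd (hker x (dotProduct_self_eq_zero.mp h.symm)) hx

private lemma sTik_epoch_sum {M : ℕ} {α : Type*} [AddCommMonoid α]
    (τ : ℕ → Fin M)
    (hτ : ∀ j : ℕ, Function.Bijective (fun t : Fin M => τ (j * M + (t : ℕ))))
    (g : Fin M → α) : ∀ j : ℕ, ∑ i ∈ Finset.range (j * M), g (τ i) = j • ∑ i, g i := by
  intro j
  induction j with
  | zero => simp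
  | succ j ih =>
    have hsplit : ∑ i ∈ Finset.range ((j + 1) * M), g (τ i)
        = ∑ i ∈ Finset.range (j * M), g (τ i)
          + ∑ i ∈ Finset.Ico (j * M) ((j + 1) * M), g (τ i) := by
      have hle : j * M ≤ (j + 1) * M := Nat.mul_le_mul_right M (Nat.le_succ j)
      rw [Finset.range_eq_Ico, ← Finset.sum_Ico_consecutive (fun i => g (τ i))
        (Nat.zero_le (j * M)) hle, ← Finset.range_eq_Ico]
    have hblock : ∑ i ∈ Finset.Ico (j * M) ((j + 1) * M), g (τ i) = ∑ i, g i := by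
      rw [Finset.sum_Ico_eq_sum_range]
      have hM : (j + 1) * M - j * M = M := by ring_nf; omega
      rw [hM, ← Fin.sum_univ_eq_sum_range (fun t => g (τ (j * M + t))) M]
      exact Function.Bijective.sum_comp (hτ j) g
    rw [hsplit, ih, hblock, succ_nsmul]

/-- if in random cyclic sampling the parameters satisfy
`(M/k)·Σ_{i=1}^k Λ_i = λ` at every epoch boundary `k = jM` (e.g. `Λ_i = λ/M`), then after
every epoch the sampled Tikhonov iterate equals the exact Tikhonov solution `x(λ)`. -/
theorem sTik_epoch_exact_Tikhonov
    {m n s ℓ M : ℕ} (hM : 0 < M)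
    (A : Matrix (Fin m) (Fin n) ℝ) (b : Fin m → ℝ)
    (L : Matrix (Fin s) (Fin n) ℝ) (hL : L.rank = n)
    (W : Fin M → Matrix (Fin m) (Fin ℓ) ℝ)
    (hW : ∑ i, W i * (W i)ᵀ = (1 : Matrix (Fin m) (Fin m) ℝ))
    (τ : ℕ → Fin M)
    (hτ : ∀ j : ℕ, Function.Bijective (fun t : Fin M => τ (j * M + (t : ℕ))))
    (Ai : Fin M → Matrix (Fin ℓ) (Fin n) ℝ) (hAi : ∀ i, Ai i = (W i)ᵀ * A)
    (bi : Fin M → Fin ℓ → ℝ) (hbi : ∀ i, bi i = (W i)ᵀ.mulVec b)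
    (lam0 : ℝ) (hlam0 : 0 < lam0)
    (Lam : ℕ → ℝ) (lam : ℕ → ℝ)
    (hlamdef : ∀ j, lam j = ∑ i ∈ Finset.range j, Lam i)
    (hpos : ∀ j, 0 < j → 0 < lam j)
    (hconst : ∀ j : ℕ, 0 < j → ((M : ℝ) / ((j * M : ℕ) : ℝ)) * lam (j * M) = lam0)
    (B : ℕ → Matrix (Fin n) (Fin n) ℝ)
    (hB : ∀ j, B j = (lam j • (Lᵀ * L) + ∑ i ∈ Finset.range j, (Ai (τ i))ᵀ * Ai (τ i))⁻¹)
    (x0 : Fin n → ℝ)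
    (x : ℕ → Fin n → ℝ) (hx0 : x 0 = x0)
    (hx : ∀ k, x (k + 1) =
      x k - (B (k + 1)).mulVec ((Ai (τ k))ᵀ.mulVec ((Ai (τ k)).mulVec (x k) - bi (τ k))
        + Lam k • (Lᵀ * L).mulVec (x k))) :
    ∀ j : ℕ, 0 < j →
      x (j * M) = (Aᵀ * A + lam0 • (Lᵀ * L))⁻¹.mulVec (Aᵀ.mulVec b) := by
  classical
  have hGpd : (Lᵀ * L).PosDef := sTik_posDef_of_rank L hL
  set S : ℕ → Matrix (Fin n) (Fin n) ℝ := fun k =>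
    lam k • (Lᵀ * L) + ∑ i ∈ Finset.range k, (Ai (τ i))ᵀ * Ai (τ i) with hSdef
  have hB' : ∀ j, B j = (S j)⁻¹ := hB
  have hpsd : ∀ k, (∑ i ∈ Finset.range k, (Ai (τ i))ᵀ * Ai (τ i)).PosSemidef := by
    intro k
    induction k with
    | zero => simpa using (Matrix.PosSemidef.zero (n := Fin n) (R := ℝ))
    | succ k ih =>
      rw [Finset.sum_range_succ]
      have := sTik_posSemidef_tmul (Ai (τ k))
      exact ih.add this
  have hSpd : ∀ k, 0 < k → (S k).PosDef := fun k hk =>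
    (sTik_smul_posDef hGpd (hpos k hk)).add_posSemidef (hpsd k)
  have hlamz : lam 0 = 0 := by simp [hlamdef]
  have hlamsucc : ∀ k, lam (k + 1) = lam k + Lam k := by
    intro k; simp [hlamdef, Finset.sum_range_succ]
  have hSsucc : ∀ k, S (k + 1)
      = S k + Lam k • (Lᵀ * L) + (Ai (τ k))ᵀ * Ai (τ k) := by
    intro k
    show lam (k + 1) • (Lᵀ * L) + ∑ i ∈ Finset.range (k + 1), (Ai (τ i))ᵀ * Ai (τ i)
        = (lam k • (Lᵀ * L) + ∑ i ∈ Finset.range k, (Ai (τ i))ᵀ * Ai (τ i))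
          + Lam k • (Lᵀ * L) + (Ai (τ k))ᵀ * Ai (τ k)
    rw [hlamsucc k, add_smul, Finset.sum_range_succ]
    abel
  have key : ∀ k, S k *ᵥ x k = ∑ i ∈ Finset.range k, (Ai (τ i))ᵀ *ᵥ bi (τ i) := by
    intro k
    induction k with
    | zero =>
      show (lam 0 • (Lᵀ * L) + _) *ᵥ x 0 = _
      simp [hlamz]
    | succ k ih =>
      have hU : IsUnit (S (k + 1)).det :=
        (hSpd (k + 1) k.succ_pos).det_pos.ne'.isUnit
      have hSB : S (k + 1) * B (k + 1) = 1 := by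
        rw [hB' (k + 1)]; exact Matrix.mul_nonsing_inv _ hU
      rw [Finset.sum_range_succ, ← ih, hx k, mulVec_sub, mulVec_mulVec, hSB, one_mulVec,
        hSsucc k, add_mulVec, add_mulVec, mulVec_sub, smul_mulVec]
      simp only [← Matrix.mulVec_mulVec]
      abel
  intro j hj
  -- value of lam at the epoch boundary
  have hMne : (M : ℝ) ≠ 0 := Nat.cast_ne_zero.mpr hM.ne'
  have hjne : (j : ℝ) ≠ 0 := Nat.cast_ne_zero.mpr hj.ne'
  have hlamjM : lam (j * M) = (j : ℝ) * lam0 := by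
    have h := hconst j hj
    rw [Nat.cast_mul] at h
    field_simp at h
    have h3 : (M : ℝ) * lam (j * M) = (M : ℝ) * ((j : ℝ) * lam0) := by
      linear_combination (M : ℝ) * h
    exact mul_left_cancel₀ hMne h3
  -- epoch sums
  have hsumA : ∑ i ∈ Finset.range (j * M), (Ai (τ i))ᵀ * Ai (τ i) = j • (Aᵀ * A) := by
    rw [sTik_epoch_sum τ hτ (fun i => (Ai i)ᵀ * Ai i) j]
    congr 1
    have : ∀ i : Fin M, (Ai i)ᵀ * Ai i = Aᵀ * (W i * (W i)ᵀ) * A := by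
      intro i
      rw [hAi i, transpose_mul, transpose_transpose]
      simp only [Matrix.mul_assoc]
    calc ∑ i : Fin M, (Ai i)ᵀ * Ai i
        = ∑ i : Fin M, Aᵀ * (W i * (W i)ᵀ) * A := Finset.sum_congr rfl fun i _ => this i
      _ = Aᵀ * (∑ i : Fin M, W i * (W i)ᵀ) * A := by rw [Matrix.mul_sum, Matrix.sum_mul]
      _ = Aᵀ * A := by rw [hW, Matrix.mul_one]
  have hsumb : ∑ i ∈ Finset.range (j * M), (Ai (τ i))ᵀ *ᵥ bi (τ i) = j • (Aᵀ *ᵥ b) := by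
    rw [sTik_epoch_sum τ hτ (fun i => (Ai i)ᵀ *ᵥ bi i) j]
    congr 1
    have : ∀ i : Fin M, (Ai i)ᵀ *ᵥ bi i = (Aᵀ * (W i * (W i)ᵀ)) *ᵥ b := by
      intro i
      rw [hAi i, hbi i, transpose_mul, transpose_transpose, mulVec_mulVec,
        Matrix.mul_assoc]
    calc ∑ i : Fin M, (Ai i)ᵀ *ᵥ bi i
        = ∑ i : Fin M, (Aᵀ * (W i * (W i)ᵀ)) *ᵥ b := Finset.sum_congr rfl fun i _ => this i
      _ = (Aᵀ * ∑ i : Fin M, W i * (W i)ᵀ) *ᵥ b := by rw [Matrix.mul_sum, sTik_sum_mulVec]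
      _ = Aᵀ *ᵥ b := by rw [hW, Matrix.mul_one]
  -- the matrix at the epoch boundary
  set C : Matrix (Fin n) (Fin n) ℝ := Aᵀ * A + lam0 • (Lᵀ * L) with hCdef
  have hSjM : S (j * M) = (j : ℝ) • C := by
    show lam (j * M) • (Lᵀ * L) + _ = _
    rw [hsumA, hlamjM, hCdef, smul_add, smul_smul, mul_comm ((j:ℝ)) lam0, ← smul_smul,
      ← Nat.cast_smul_eq_nsmul ℝ j (Aᵀ * A)]
    abel
  have hkey := key (j * M)
  rw [hSjM, hsumb, ← Nat.cast_smul_eq_nsmul ℝ j (Aᵀ *ᵥ b), smul_mulVec] at hkey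
  have hCx : C *ᵥ x (j * M) = Aᵀ *ᵥ b := by
    have := smul_right_injective (Fin n → ℝ) hjne hkey
    exact this
  have hCpd : C.PosDef := by
    rw [hCdef, add_comm]
    exact (sTik_smul_posDef hGpd hlam0).add_posSemidef
      (by simpa [conjTranspose_eq_transpose_of_trivial] using
        Matrix.posSemidef_conjTranspose_mul_self A)
  have hCU : IsUnit C.det := hCpd.det_pos.ne'.isUnit
  rw [← hCx, mulVec_mulVec, Matrix.nonsing_inv_mul _ hCU, one_mulVec]
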